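/- Let T > 0, let a, b, c, f : (0,T) × (0,1) → ℝ with sup_{0<x<1, 0<t≤T} |f(t,x)| < +∞, and let u ∈ C⁰([0,T] × [0,1]) with u[t] ∈ C²((0,1)) for almost all t ∈ (0,T), ∂u/∂t existing and continuous on (0,T) × [0,1], the derivatives ∂u/∂x(t,0), ∂u/∂x(t,1) existing for all t ∈ (0,T], and ∂u/∂t = a·∂²u/∂x² + b·∂u/∂x + c·u + f for almost all t ∈ (0,T) and all x ∈ (0,1). Suppose a(t,x) ≥ 0 on (0,T)×(0,1) and σ := − sup_{0<x<1, t∈(0,T)} c(t,x) > 0. Then for all ζ ∈ [0,σ), all g₀, g₁ : (0,T] → (0,+∞), k₀, k₁ : (0,T] → [1,+∞), and all t ∈ (0,T]: ‖u[t]‖_∞ ≤ max( exp(−ζt)·‖u[0]‖_∞, sup_{0<s≤t} max( r₀(s), r₁(s), ‖f[s]‖_∞/(σ−ζ) )·exp(−ζ(t−s)) ), where r₀(t) := min( |u(t,0)|, | g₀(t)·∂u/∂x(t,0) − k₀(t)·u(t,0) | ) and r₁(t) := min( |u(t,1)|, | g₁(t)·∂u/∂x(t,1) + k₁(t)·u(t,1)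 | ). -/

import Mathlib

open Set MeasureTheory Filter Topology

private lemma max_on_Icc {g : ℝ → ℝ} (hg : ContinuousOn g (Set.Icc 0 1)) :
    ∃ x ∈ Set.Icc (0:ℝ) 1, (∀ y ∈ Set.Icc (0:ℝ) 1, g y ≤ g x) ∧
      sSup (g '' Set.Icc 0 1) = g x := by
  obtain ⟨x, hx, hmax⟩ := isCompact_Icc.exists_isMaxOn ⟨0, by norm_num⟩ hg
  have hmax' : ∀ y ∈ Set.Icc (0:ℝ) 1, g y ≤ g x := fun y hy => hmax hy
  refine ⟨x, hx, hmax', le_antisymm (csSup_le (by exact ⟨g 0, 0, by norm_num, rfl⟩) ?_)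
    (le_csSup ⟨g x, ?_⟩ ⟨x, hx, rfl⟩)⟩
  · rintro y ⟨z, hz, rfl⟩; exact hmax' z hz
  · rintro y ⟨z, hz, rfl⟩; exact hmax' z hz

private lemma deriv_nonneg_of_max_left {h : ℝ → ℝ} {h' A : ℝ} (hd : HasDerivAt h h' A)
    (hA : 0 < A) (hmax : ∀ s ∈ Set.Icc 0 A, h s ≤ h A) : 0 ≤ h' := by
  have h1 := hasDerivAt_iff_tendsto_slope.mp hd
  have h2 : Tendsto (slope h A) (𝓝[<] A) (𝓝 h') :=
    h1.mono_left (nhdsWithin_mono _ fun y hy => ne_of_lt hy)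
  refine ge_of_tendsto h2 ?_
  filter_upwards [Ioo_mem_nhdsLT_of_mem (⟨hA, le_refl A⟩ : A ∈ Set.Ioc 0 A)] with s hs
  have h3 : h s - h A ≤ 0 := sub_nonpos.mpr (hmax s ⟨le_of_lt hs.1, le_of_lt hs.2⟩)
  have h4 : s - A < 0 := sub_neg.mpr hs.2
  rw [slope_def_field]
  exact div_nonneg_of_nonpos h3 (le_of_lt h4)

private lemma bd_deriv_left {h : ℝ → ℝ} {h' : ℝ}
    (hd : HasDerivWithinAt h h' (Set.Icc 0 1) 0)
    (hmax : ∀ y ∈ Set.Icc (0:ℝ) 1, h y ≤ h 0) : h' ≤ 0 := by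
  have h1 := hasDerivWithinAt_iff_tendsto_slope.mp hd
  have h2 : Tendsto (slope h 0) (𝓝[>] (0:ℝ)) (𝓝 h') := by
    rw [← nhdsWithin_Ioc_eq_nhdsGT (zero_lt_one : (0:ℝ) < 1)]
    exact h1.mono_left (nhdsWithin_mono _ fun y hy =>
      ⟨⟨le_of_lt hy.1, hy.2⟩, ne_of_gt hy.1⟩)
  refine le_of_tendsto h2 ?_
  filter_upwards [Ioo_mem_nhdsGT_of_mem (⟨le_refl (0:ℝ), zero_lt_one⟩ : (0:ℝ) ∈ Set.Ico 0 1)]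
    with s hs
  rw [slope_def_field]
  have h3 : h s - h 0 ≤ 0 := sub_nonpos.mpr (hmax s ⟨le_of_lt hs.1, le_of_lt hs.2⟩)
  exact div_nonpos_of_nonpos_of_nonneg h3 (by linarith [hs.1])

private lemma bd_deriv_right {h : ℝ → ℝ} {h' : ℝ}
    (hd : HasDerivWithinAt h h' (Set.Icc 0 1) 1)
    (hmax : ∀ y ∈ Set.Icc (0:ℝ) 1, h y ≤ h 1) : 0 ≤ h' := by
  have h1 := hasDerivWithinAt_iff_tendsto_slope.mp hd
  have h2 : Tendsto (slope h 1) (𝓝[<] (1:ℝ)) (𝓝 h') := by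
    rw [← nhdsWithin_Ico_eq_nhdsLT (zero_lt_one : (0:ℝ) < 1)]
    exact h1.mono_left (nhdsWithin_mono _ fun y hy =>
      ⟨⟨hy.1, le_of_lt hy.2⟩, ne_of_lt hy.2⟩)
  refine ge_of_tendsto h2 ?_
  filter_upwards [Ioo_mem_nhdsLT_of_mem (⟨zero_lt_one, le_refl (1:ℝ)⟩ : (1:ℝ) ∈ Set.Ioc 0 1)]
    with s hs
  rw [slope_def_field]
  have h3 : h s - h 1 ≤ 0 := sub_nonpos.mpr (hmax s ⟨le_of_lt hs.1, le_of_lt hs.2⟩)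
  exact div_nonneg_of_nonpos h3 (by linarith [hs.2])

private lemma second_deriv_nonpos {g g' : ℝ → ℝ} {g'' x₀ : ℝ} (hx₀ : x₀ ∈ Set.Ioo (0:ℝ) 1)
    (hd1 : ∀ x ∈ Set.Ioo (0:ℝ) 1, HasDerivAt g (g' x) x)
    (hd2 : HasDerivAt g' g'' x₀)
    (hmax : ∀ y ∈ Set.Icc (0:ℝ) 1, g y ≤ g x₀) : g' x₀ = 0 ∧ g'' ≤ 0 := by
  have hloc : IsLocalMax g x₀ := by
    filter_upwards [Icc_mem_nhds hx₀.1 hx₀.2] with y hy using hmax y hy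
  have hg'0 : g' x₀ = 0 := hloc.hasDerivAt_eq_zero (hd1 x₀ hx₀)
  refine ⟨hg'0, ?_⟩
  set m : ℝ := (1 - x₀) / 2 with hm
  have hm0 : 0 < m := by simp only [hm]; linarith [hx₀.2]
  have hxi : ∀ n : ℕ, ∃ ξ, (ξ ∈ Set.Ioo x₀ (x₀ + m / (n + 1))) ∧ g' ξ ≤ 0 := by
    intro n
    have hn1 : (0:ℝ) < (n:ℝ) + 1 := by positivity
    have hmm : m / ((n:ℝ) + 1) ≤ m := by
      rw [div_le_iff₀ hn1]; nlinarith
    have hyn : x₀ < x₀ + m / (n + 1) := by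
      have : 0 < m / ((n:ℝ) + 1) := by positivity
      linarith
    have hyn1 : x₀ + m / ((n:ℝ) + 1) < 1 := by
      have : x₀ + m < 1 := by simp only [hm]; linarith [hx₀.2]
      linarith
    have hsub : Set.Icc x₀ (x₀ + m / (n + 1)) ⊆ Set.Ioo 0 1 := fun z hz =>
      ⟨lt_of_lt_of_le hx₀.1 hz.1, lt_of_le_of_lt hz.2 hyn1⟩
    have hcont : ContinuousOn g (Set.Icc x₀ (x₀ + m / (n + 1))) := fun z hz =>
      ((hd1 z (hsub hz)).continuousAt).continuousWithinAt
    have hder : ∀ z ∈ Set.Ioo x₀ (x₀ + m / (n + 1)), HasDerivAt g (g' z) z := fun z hz =>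
      hd1 z (hsub ⟨le_of_lt hz.1, le_of_lt hz.2⟩)
    obtain ⟨ξ, hξ, hξeq⟩ := exists_hasDerivAt_eq_slope g g' hyn hcont hder
    refine ⟨ξ, hξ, ?_⟩
    rw [hξeq]
    have h5 : g (x₀ + m / (n + 1)) - g x₀ ≤ 0 :=
      sub_nonpos.mpr (hmax _ ⟨by linarith [hx₀.1], le_of_lt hyn1⟩)
    exact div_nonpos_of_nonpos_of_nonneg h5 (by linarith)
  choose ξ hξmem hξle using hxi
  have hm_tend : Tendsto (fun n : ℕ => x₀ + m / (n + 1)) atTop (𝓝 x₀) := by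
    have h0 : Tendsto (fun n : ℕ => m / ((n:ℝ) + 1)) atTop (𝓝 0) :=
      Tendsto.div_atTop tendsto_const_nhds
        (tendsto_atTop_add_const_right _ 1 tendsto_natCast_atTop_atTop)
    simpa using tendsto_const_nhds.add h0
  have hξt : Tendsto ξ atTop (𝓝 x₀) :=
    tendsto_of_tendsto_of_tendsto_of_le_of_le tendsto_const_nhds hm_tend
      (fun n => le_of_lt (hξmem n).1) (fun n => le_of_lt (hξmem n).2)
  have hslope := hasDerivAt_iff_tendsto_slope.mp hd2
  have hξt' : Tendsto ξ atTop (𝓝[≠] x₀) :=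
    tendsto_nhdsWithin_of_tendsto_nhds_of_eventually_within _ hξt
      (Eventually.of_forall fun n => ne_of_gt (hξmem n).1)
  refine le_of_tendsto (hslope.comp hξt') (Eventually.of_forall fun n => ?_)
  show slope g' x₀ (ξ n) ≤ 0
  rw [slope_def_field, hg'0, sub_zero]
  exact div_nonpos_of_nonpos_of_nonneg (hξle n) (by linarith [(hξmem n).1])

private lemma good_dense {T : ℝ} {P : ℝ → Prop}
    (hP : ∀ᵐ s ∂(volume.restrict (Set.Ioo 0 T)), P s)
    {α β : ℝ} (hα : 0 ≤ α) (hαβ : α < β) (hβ : β ≤ T) : ∃ s, s ∈ Set.Ioo α β ∧ P s := by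
  by_contra h
  push_neg at h
  have hsub : Set.Ioo α β ⊆ {s | ¬ P s} := fun s hs => h s hs
  have h0 : volume.restrict (Set.Ioo 0 T) {s | ¬ P s} = 0 := ae_iff.mp hP
  have h1 : volume.restrict (Set.Ioo 0 T) (Set.Ioo α β) = 0 :=
    le_antisymm (h0 ▸ measure_mono hsub) zero_le
  rw [Measure.restrict_apply' measurableSet_Ioo] at h1
  have h2 : Set.Ioo α β ∩ Set.Ioo 0 T = Set.Ioo α β := by
    apply Set.inter_eq_self_of_subset_left
    exact fun z hz => ⟨lt_of_le_of_lt hα hz.1, lt_of_lt_of_le hz.2 hβ⟩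
  rw [h2, Real.volume_Ioo] at h1
  simp only [ENNReal.ofReal_eq_zero] at h1
  linarith

set_option maxHeartbeats 1000000 in
private lemma key
    (T : ℝ) (hT : 0 < T)
    (a b c f : ℝ → ℝ → ℝ)
    (hf_bdd : ∃ M : ℝ, ∀ t ∈ Set.Ioc (0:ℝ) T, ∀ x ∈ Set.Ioo (0:ℝ) 1, |f t x| ≤ M)
    (u ut ux uxx : ℝ → ℝ → ℝ)
    (hu_cont : ContinuousOn (fun p : ℝ × ℝ => u p.1 p.2) (Set.Icc 0 T ×ˢ Set.Icc 0 1))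
    (hut : ∀ t ∈ Set.Ioo (0:ℝ) T, ∀ x ∈ Set.Icc (0:ℝ) 1,
      HasDerivAt (fun τ => u τ x) (ut t x) t)
    (hut_cont : ContinuousOn (fun p : ℝ × ℝ => ut p.1 p.2) (Set.Ioo 0 T ×ˢ Set.Icc 0 1))
    (hux_bd : ∀ t ∈ Set.Ioc (0:ℝ) T,
      HasDerivWithinAt (u t) (ux t 0) (Set.Icc 0 1) 0 ∧
      HasDerivWithinAt (u t) (ux t 1) (Set.Icc 0 1) 1)
    (hC2_pde : ∀ᵐ t ∂(volume.restrict (Set.Ioo 0 T)),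
      (∀ x ∈ Set.Ioo (0:ℝ) 1, HasDerivAt (u t) (ux t x) x) ∧
      (∀ x ∈ Set.Ioo (0:ℝ) 1, HasDerivAt (ux t) (uxx t x) x) ∧
      ContinuousOn (uxx t) (Set.Ioo 0 1) ∧
      (∀ x ∈ Set.Ioo (0:ℝ) 1,
        ut t x = a t x * uxx t x + b t x * ux t x + c t x * u t x + f t x))
    (ha : ∀ t ∈ Set.Ioo (0:ℝ) T, ∀ x ∈ Set.Ioo (0:ℝ) 1, 0 ≤ a t x)
    (σ : ℝ)
    (hσ_def : σ = - sSup ((fun p : ℝ × ℝ => c p.1 p.2) '' (Set.Ioo 0 T ×ˢ Set.Ioo 0 1)))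
    (hσ : 0 < σ)
    (ζ : ℝ) (hζ0 : 0 ≤ ζ) (hζσ : ζ < σ) (g₀ g₁ k₀ k₁ : ℝ → ℝ)
    (hg₀ : ∀ s ∈ Set.Ioc (0:ℝ) T, 0 < g₀ s) (hg₁ : ∀ s ∈ Set.Ioc (0:ℝ) T, 0 < g₁ s)
    (hk₀ : ∀ s ∈ Set.Ioc (0:ℝ) T, 1 ≤ k₀ s) (hk₁ : ∀ s ∈ Set.Ioc (0:ℝ) T, 1 ≤ k₁ s)
    (t : ℝ) (ht0 : 0 < t) (htT : t < T) :
    sSup ((fun x => |u t x|) '' Set.Icc 0 1) ≤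
        max (Real.exp (-ζ * t) * sSup ((fun x => |u 0 x|) '' Set.Icc 0 1))
          (sSup ((fun s =>
              max (max
                  (min (|u s 0|) (|g₀ s * ux s 0 - k₀ s * u s 0|))
                  (min (|u s 1|) (|g₁ s * ux s 1 + k₁ s * u s 1|)))
                (sSup ((fun x => |f s x|) '' Set.Ioo 0 1) / (σ - ζ)) *
              Real.exp (-ζ * (t - s))) '' Set.Ioc 0 t)) := by
  have hσζ : 0 < σ - ζ := sub_pos.mpr hζσ
  obtain ⟨Mf, hMf⟩ := hf_bdd
  have hMf0 : 0 ≤ Mf :=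
    le_trans (abs_nonneg _) (hMf T ⟨hT, le_refl T⟩ (1/2) (by norm_num))
  -- c is bounded above by -σ
  have hc : ∀ s ∈ Set.Ioo (0:ℝ) T, ∀ x ∈ Set.Ioo (0:ℝ) 1, c s x ≤ -σ := by
    intro s hs x hx
    by_cases hb : BddAbove ((fun p : ℝ × ℝ => c p.1 p.2) '' (Set.Ioo 0 T ×ˢ Set.Ioo 0 1))
    · have h1 : c s x ≤ sSup ((fun p : ℝ × ℝ => c p.1 p.2) '' (Set.Ioo 0 T ×ˢ Set.Ioo 0 1)) :=
        le_csSup hb ⟨(s, x), ⟨hs, hx⟩, rfl⟩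
      have h2 : sSup ((fun p : ℝ × ℝ => c p.1 p.2) '' (Set.Ioo 0 T ×ˢ Set.Ioo 0 1)) = -σ := by
        rw [hσ_def]; ring
      linarith
    · rw [Real.sSup_of_not_bddAbove hb] at hσ_def
      simp at hσ_def
      linarith
  -- global bound on |u|
  obtain ⟨Cu, hCu⟩ : ∃ C : ℝ, ∀ p ∈ (Set.Icc (0:ℝ) T ×ˢ Set.Icc (0:ℝ) 1), |u p.1 p.2| ≤ C := by
    obtain ⟨C, hC⟩ := (isCompact_Icc.prod isCompact_Icc).exists_bound_of_continuousOn hu_cont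
    exact ⟨C, fun p hp => by simpa using hC p hp⟩
  -- continuity of x ↦ |u s x|
  have huc : ∀ s ∈ Set.Icc (0:ℝ) T, ContinuousOn (fun x => |u s x|) (Set.Icc 0 1) := by
    intro s hs
    have h1 : ContinuousOn (fun x : ℝ => u s x) (Set.Icc 0 1) := by
      have := hu_cont.comp
        ((continuous_const.prodMk continuous_id).continuousOn :
          ContinuousOn (fun x : ℝ => ((s, x) : ℝ × ℝ)) (Set.Icc 0 1))
        (fun x hx => ⟨hs, hx⟩)
      exact this
    exact h1.abs
  -- facts about the sup of |f s ·|
  set F : ℝ → ℝ := fun s => sSup ((fun x => |f s x|) '' Set.Ioo 0 1) with hF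
  have hFbdd : ∀ s ∈ Set.Ioc (0:ℝ) T, BddAbove ((fun x => |f s x|) '' Set.Ioo 0 1) := by
    intro s hs
    exact ⟨Mf, by rintro y ⟨x, hx, rfl⟩; exact hMf s hs x hx⟩
  have hFub : ∀ s ∈ Set.Ioc (0:ℝ) T, ∀ x ∈ Set.Ioo (0:ℝ) 1, |f s x| ≤ F s := by
    intro s hs x hx
    exact le_csSup (hFbdd s hs) ⟨x, hx, rfl⟩
  -- the function Q
  set Q : ℝ → ℝ := fun s =>
      max (max (min (|u s 0|) (|g₀ s * ux s 0 - k₀ s * u s 0|))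
          (min (|u s 1|) (|g₁ s * ux s 1 + k₁ s * u s 1|))) (F s / (σ - ζ)) with hQ
  have hQ0 : ∀ s, 0 ≤ Q s := by
    intro s
    exact le_trans (le_min (abs_nonneg _) (abs_nonneg _)) (le_trans (le_max_left _ _) (le_max_left _ _))
  have hQub : ∀ s ∈ Set.Ioc (0:ℝ) T, Q s ≤ max Cu (Mf / (σ - ζ)) := by
    intro s hs
    have hs' : s ∈ Set.Icc (0:ℝ) T := ⟨le_of_lt hs.1, hs.2⟩
    have h0 : |u s 0| ≤ Cu := hCu (s, 0) ⟨hs', by norm_num⟩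
    have h1 : |u s 1| ≤ Cu := hCu (s, 1) ⟨hs', by norm_num⟩
    have hFs : F s ≤ Mf := Real.sSup_le (by rintro y ⟨x, hx, rfl⟩; exact hMf s hs x hx) hMf0
    refine max_le (max_le ?_ ?_) ?_
    · exact le_trans (min_le_left _ _) (le_trans h0 (le_max_left _ _))
    · exact le_trans (min_le_left _ _) (le_trans h1 (le_max_left _ _))
    · refine le_trans ?_ (le_max_right _ _)
      exact div_le_div_of_nonneg_right hFs (le_of_lt hσζ) |>.trans le_rfl
  -- the sup set S
  set S : Set ℝ := (fun s => Q s * Real.exp (-ζ * (t - s))) '' Set.Ioc 0 t with hS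
  have hSbdd : BddAbove S := by
    refine ⟨max Cu (Mf / (σ - ζ)), ?_⟩
    rintro y ⟨s, hs, rfl⟩
    have he1 : Real.exp (-ζ * (t - s)) ≤ 1 := by
      rw [Real.exp_le_one_iff]
      have : 0 ≤ t - s := sub_nonneg.mpr hs.2
      nlinarith
    calc Q s * Real.exp (-ζ * (t - s)) ≤ Q s * 1 :=
          mul_le_mul_of_nonneg_left he1 (hQ0 s)
      _ = Q s := mul_one _
      _ ≤ max Cu (Mf / (σ - ζ)) := hQub s ⟨hs.1, le_trans hs.2 (le_of_lt htT)⟩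
  have hS_le : ∀ s ∈ Set.Ioc (0:ℝ) t, Q s * Real.exp (-ζ * (t - s)) ≤ sSup S := by
    intro s hs
    exact le_csSup hSbdd ⟨s, hs, rfl⟩
  -- M0
  set M0 : ℝ := sSup ((fun x => |u 0 x|) '' Set.Icc 0 1) with hM0
  have hM0nn : 0 ≤ M0 := Real.sSup_nonneg (by rintro y ⟨x, hx, rfl⟩; exact abs_nonneg _)
  set R' : ℝ := max (Real.exp (-ζ * t) * M0) (sSup S) with hR'
  have hR'0 : 0 ≤ R' := le_trans (by positivity) (le_max_left _ _)
  -- reduce goal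
  show sSup ((fun x => |u t x|) '' Set.Icc 0 1) ≤ R'
  by_contra hcon
  push_neg at hcon
  obtain ⟨xh, hxh, hxhmax, hxhsup⟩ := max_on_Icc (huc t ⟨le_of_lt ht0, le_of_lt htT⟩)
  rw [hxhsup] at hcon
  set Mt : ℝ := |u t xh| with hMt
  set ε : ℝ := Mt - R' with hε
  have hε0 : 0 < ε := sub_pos.mpr hcon
  set δ : ℝ := (σ - ζ) * ε / 2 with hδ
  have hδ0 : 0 < δ := by positivity
  -- the perturbed functional Φ and its maximum over the rectangle
  set Φ : ℝ × ℝ → ℝ := fun p => Real.exp (ζ * (p.1 - t)) * |u p.1 p.2| + δ * p.1 with hΦ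
  have hKsub : (Set.Icc (0:ℝ) t ×ˢ Set.Icc (0:ℝ) 1) ⊆ (Set.Icc 0 T ×ˢ Set.Icc 0 1) := by
    rintro ⟨s, x⟩ ⟨hs, hx⟩
    exact ⟨⟨hs.1, le_trans hs.2 (le_of_lt htT)⟩, hx⟩
  have hΦc : ContinuousOn Φ (Set.Icc 0 t ×ˢ Set.Icc 0 1) := by
    apply ContinuousOn.add
    · exact ContinuousOn.mul
        (Continuous.continuousOn
          (Real.continuous_exp.comp (continuous_const.mul (continuous_fst.sub continuous_const))))
        ((hu_cont.mono hKsub).abs)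
    · exact Continuous.continuousOn (continuous_const.mul continuous_fst)
  obtain ⟨pstar, hpK, hpmax⟩ := (isCompact_Icc.prod isCompact_Icc).exists_isMaxOn
    ⟨(t, xh), ⟨⟨le_of_lt ht0, le_refl t⟩, hxh⟩⟩ hΦc
  have hpmax' : ∀ q ∈ (Set.Icc (0:ℝ) t ×ˢ Set.Icc (0:ℝ) 1), Φ q ≤ Φ pstar :=
    fun q hq => hpmax hq
  obtain ⟨ts, xs⟩ := pstar
  obtain ⟨hts, hxs⟩ := hpK
  have hVlb : Mt + δ * t ≤ Φ (ts, xs) := by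
    have := hpmax' (t, xh) ⟨⟨le_of_lt ht0, le_refl t⟩, hxh⟩
    simpa [hΦ] using this
  -- ts > 0
  have hts0 : 0 < ts := by
    rcases lt_or_eq_of_le hts.1 with h | h
    · exact h
    · exfalso
      subst h
      have h1 : Φ (0, xs) = Real.exp (ζ * (0 - t)) * |u 0 xs| := by
        rw [hΦ]; norm_num
      have h2 : |u 0 xs| ≤ M0 := by
        obtain ⟨x0, hx0, hx0max, hx0sup⟩ := max_on_Icc (huc 0 ⟨le_refl 0, le_of_lt hT⟩)
        rw [hM0, hx0sup]
        exact hx0max xs hxs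
      have h3 : Real.exp (ζ * (0 - t)) * |u 0 xs| ≤ Real.exp (-ζ * t) * M0 := by
        have he : ζ * (0 - t) = -ζ * t := by ring
        rw [he]
        exact mul_le_mul_of_nonneg_left h2 (le_of_lt (Real.exp_pos _))
      have h4 : Real.exp (-ζ * t) * M0 ≤ R' := le_max_left _ _
      have h5 : Φ (0, xs) ≤ R' := by rw [h1]; exact le_trans h3 h4
      have h6 : R' < Mt := hcon
      nlinarith
  have htsT : ts < T := lt_of_le_of_lt hts.2 htT
  -- the quantity Wstar
  set Wstar : ℝ := Real.exp (ζ * (ts - t)) * |u ts xs| with hWstar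
  have hWstar_eq : Φ (ts, xs) = Wstar + δ * ts := by rw [hΦ, hWstar]
  have hWstar_lb : Mt ≤ Wstar := by
    have h1 : δ * ts ≤ δ * t := mul_le_mul_of_nonneg_left hts.2 (le_of_lt hδ0)
    nlinarith [hVlb, hWstar_eq]
  have hWstar_pos : 0 < Wstar := lt_of_le_of_lt hR'0 (lt_of_lt_of_le hcon hWstar_lb)
  have hSR : sSup S ≤ R' := by rw [hR']; exact le_max_right _ _
  -- sequence of good times tending to ts
  have hgood : ∀ n : ℕ, ∃ sn, (sn ∈ Set.Ioo (max (ts - 1/(n+1)) (ts/2)) ts) ∧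
      ((∀ x ∈ Set.Ioo (0:ℝ) 1, HasDerivAt (u sn) (ux sn x) x) ∧
       (∀ x ∈ Set.Ioo (0:ℝ) 1, HasDerivAt (ux sn) (uxx sn x) x) ∧
       ContinuousOn (uxx sn) (Set.Ioo 0 1) ∧
       (∀ x ∈ Set.Ioo (0:ℝ) 1,
         ut sn x = a sn x * uxx sn x + b sn x * ux sn x + c sn x * u sn x + f sn x)) := by
    intro n
    apply good_dense hC2_pde
    · exact le_of_lt (lt_of_lt_of_le (half_pos hts0) (le_max_right _ _))
    · apply max_lt
      · have h1 : (0:ℝ) < 1/((n:ℝ)+1) := by positivity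
        linarith
      · linarith
    · exact le_of_lt htsT
  choose s hsmem hsgood using hgood
  have hs_lt : ∀ n, s n < ts := fun n => (hsmem n).2
  have hs_pos : ∀ n, 0 < s n := fun n =>
    lt_of_le_of_lt (le_of_lt (half_pos hts0)) (lt_of_le_of_lt (le_max_right _ _) (hsmem n).1)
  have hs_tend : Tendsto s atTop (𝓝 ts) := by
    have hlow : Tendsto (fun n : ℕ => ts - 1/((n:ℝ)+1)) atTop (𝓝 ts) := by
      have h0 : Tendsto (fun n : ℕ => 1/((n:ℝ)+1)) atTop (𝓝 0) :=
        Tendsto.div_atTop tendsto_const_nhds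
          (tendsto_atTop_add_const_right _ 1 tendsto_natCast_atTop_atTop)
      simpa using tendsto_const_nhds.sub h0
    refine tendsto_of_tendsto_of_tendsto_of_le_of_le hlow tendsto_const_nhds
      (fun n => le_of_lt (lt_of_le_of_lt (le_max_left _ _) (hsmem n).1))
      (fun n => le_of_lt (hs_lt n))
  have hsIccT : ∀ n, s n ∈ Set.Icc (0:ℝ) T := fun n =>
    ⟨le_of_lt (hs_pos n), le_of_lt (lt_trans (hs_lt n) htsT)⟩
  have hsIoc : ∀ n, s n ∈ Set.Ioc (0:ℝ) T := fun n =>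
    ⟨hs_pos n, le_of_lt (lt_trans (hs_lt n) htsT)⟩
  have hsIooT : ∀ n, s n ∈ Set.Ioo (0:ℝ) T := fun n =>
    ⟨hs_pos n, lt_trans (hs_lt n) htsT⟩
  have hsIoct : ∀ n, s n ∈ Set.Ioc (0:ℝ) t := fun n =>
    ⟨hs_pos n, le_of_lt (lt_of_lt_of_le (hs_lt n) hts.2)⟩
  -- spatial argmax at each good time
  have hXex : ∀ n : ℕ, ∃ x, x ∈ Set.Icc (0:ℝ) 1 ∧
      (∀ y ∈ Set.Icc (0:ℝ) 1, |u (s n) y| ≤ |u (s n) x|) := by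
    intro n
    obtain ⟨x, hx1, hx2, _⟩ := max_on_Icc (huc (s n) (hsIccT n))
    exact ⟨x, hx1, hx2⟩
  choose X hXmem hXmax using hXex
  obtain ⟨xbar, hxbar, φ, hφ, hXφ⟩ := isCompact_Icc.tendsto_subseq hXmem
  have hsφ : Tendsto (fun n => s (φ n)) atTop (𝓝 ts) := hs_tend.comp hφ.tendsto_atTop
  -- joint-continuity limits
  have hu_lim : Tendsto (fun n => u (s (φ n)) (X (φ n))) atTop (𝓝 (u ts xbar)) := by
    have hpt : ((ts, xbar) : ℝ × ℝ) ∈ Set.Icc (0:ℝ) T ×ˢ Set.Icc (0:ℝ) 1 :=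
      ⟨⟨le_of_lt hts0, le_of_lt htsT⟩, hxbar⟩
    have hpair : Tendsto (fun n => ((s (φ n), X (φ n)) : ℝ × ℝ)) atTop
        (𝓝[Set.Icc (0:ℝ) T ×ˢ Set.Icc (0:ℝ) 1] (ts, xbar)) :=
      tendsto_nhdsWithin_of_tendsto_nhds_of_eventually_within _ (hsφ.prodMk_nhds hXφ)
        (Eventually.of_forall fun n => ⟨hsIccT (φ n), hXmem (φ n)⟩)
    exact ((hu_cont (ts, xbar) hpt).tendsto).comp hpair
  have hu_lim2 : Tendsto (fun n => u (s (φ n)) xs) atTop (𝓝 (u ts xs)) := by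
    have hpt : ((ts, xs) : ℝ × ℝ) ∈ Set.Icc (0:ℝ) T ×ˢ Set.Icc (0:ℝ) 1 :=
      ⟨⟨le_of_lt hts0, le_of_lt htsT⟩, hxs⟩
    have hpair : Tendsto (fun n => ((s (φ n), xs) : ℝ × ℝ)) atTop
        (𝓝[Set.Icc (0:ℝ) T ×ˢ Set.Icc (0:ℝ) 1] (ts, xs)) :=
      tendsto_nhdsWithin_of_tendsto_nhds_of_eventually_within _
        (hsφ.prodMk_nhds tendsto_const_nhds)
        (Eventually.of_forall fun n => ⟨hsIccT (φ n), hxs⟩)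
    exact ((hu_cont (ts, xs) hpt).tendsto).comp hpair
  have hexp_lim : Tendsto (fun n => Real.exp (ζ * (s (φ n) - t))) atTop
      (𝓝 (Real.exp (ζ * (ts - t)))) := by
    have hcont : Continuous (fun r : ℝ => Real.exp (ζ * (r - t))) :=
      Real.continuous_exp.comp (continuous_const.mul (continuous_id.sub continuous_const))
    exact (hcont.tendsto ts).comp hsφ
  -- the squeeze: value of |u| at (ts, xbar)
  have hxbar_eq : Real.exp (ζ * (ts - t)) * |u ts xbar| = Wstar := by
    have hA_lb : ∀ n, Real.exp (ζ * (s (φ n) - t)) * |u (s (φ n)) xs| ≤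
        Real.exp (ζ * (s (φ n) - t)) * |u (s (φ n)) (X (φ n))| := fun n =>
      mul_le_mul_of_nonneg_left (hXmax (φ n) xs hxs) (le_of_lt (Real.exp_pos _))
    have hA_ub : ∀ n, Real.exp (ζ * (s (φ n) - t)) * |u (s (φ n)) (X (φ n))| ≤
        Wstar + δ * ts - δ * s (φ n) := by
      intro n
      have h1 := hpmax' (s (φ n), X (φ n))
        ⟨⟨le_of_lt (hs_pos (φ n)), le_of_lt (lt_of_lt_of_le (hs_lt (φ n)) hts.2)⟩, hXmem (φ n)⟩
      rw [hWstar_eq] at h1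
      have h2 : Φ (s (φ n), X (φ n)) =
          Real.exp (ζ * (s (φ n) - t)) * |u (s (φ n)) (X (φ n))| + δ * s (φ n) := by rw [hΦ]
      linarith
    have hlimL : Tendsto (fun n => Real.exp (ζ * (s (φ n) - t)) * |u (s (φ n)) xs|) atTop
        (𝓝 Wstar) := by
      rw [hWstar]
      exact hexp_lim.mul hu_lim2.abs
    have hlimU : Tendsto (fun n => Wstar + δ * ts - δ * s (φ n)) atTop (𝓝 Wstar) := by
      have h5 : Tendsto (fun n : ℕ => δ * s (φ n)) atTop (𝓝 (δ * ts)) :=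
        tendsto_const_nhds.mul hsφ
      have h6 : Tendsto (fun n : ℕ => Wstar + δ * ts - δ * s (φ n)) atTop
          (𝓝 (Wstar + δ * ts - δ * ts)) := tendsto_const_nhds.sub h5
      simpa using h6
    have hsq : Tendsto (fun n => Real.exp (ζ * (s (φ n) - t)) * |u (s (φ n)) (X (φ n))|) atTop
        (𝓝 Wstar) :=
      tendsto_of_tendsto_of_tendsto_of_le_of_le hlimL hlimU hA_lb hA_ub
    have hsq2 : Tendsto (fun n => Real.exp (ζ * (s (φ n) - t)) * |u (s (φ n)) (X (φ n))|) atTop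
        (𝓝 (Real.exp (ζ * (ts - t)) * |u ts xbar|)) := hexp_lim.mul hu_lim.abs
    exact tendsto_nhds_unique hsq2 hsq
  -- basic facts about the maximizer at time ts
  have hEts_pos : (0:ℝ) < Real.exp (ζ * (ts - t)) := Real.exp_pos _
  have hEts_le1 : Real.exp (ζ * (ts - t)) ≤ 1 := by
    rw [Real.exp_le_one_iff]
    nlinarith [hts.2]
  have habs_pos : 0 < |u ts xbar| := by
    have h1 : Wstar ≤ |u ts xbar| := by
      rw [← hxbar_eq]
      exact mul_le_of_le_one_left (abs_nonneg _) hEts_le1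
    exact lt_of_lt_of_le hWstar_pos h1
  have hxbar_max : ∀ y ∈ Set.Icc (0:ℝ) 1, |u ts y| ≤ |u ts xbar| := by
    intro y hy
    have h1 := hpmax' (ts, y) ⟨⟨le_of_lt hts0, hts.2⟩, hy⟩
    rw [hWstar_eq] at h1
    have h2 : Φ (ts, y) = Real.exp (ζ * (ts - t)) * |u ts y| + δ * ts := by rw [hΦ]
    rw [h2, ← hxbar_eq] at h1
    have h3 : Real.exp (ζ * (ts - t)) * |u ts y| ≤ Real.exp (ζ * (ts - t)) * |u ts xbar| := by
      linarith
    exact le_of_mul_le_mul_left h3 hEts_pos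
  have hune : u ts xbar ≠ 0 := fun h => by simp [h] at habs_pos
  set η : ℝ := if 0 < u ts xbar then 1 else -1 with hηdef
  have hηu : η * u ts xbar = |u ts xbar| := by
    rcases lt_trichotomy (u ts xbar) 0 with h | h | h
    · rw [hηdef, if_neg (by linarith), abs_of_neg h]; ring
    · exact absurd h hune
    · rw [hηdef, if_pos h, abs_of_pos h]; ring
  have hηabs : |η| = 1 := by
    rcases lt_or_ge 0 (u ts xbar) with h | h
    · rw [hηdef, if_pos h]; simp
    · rw [hηdef, if_neg (by linarith)]; simp
  have hη1 : η = 1 ∨ η = -1 := by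
    rcases lt_or_ge 0 (u ts xbar) with h | h
    · left; rw [hηdef, if_pos h]
    · right; rw [hηdef, if_neg (by linarith)]
  have hηmul_abs : ∀ z : ℝ, η * z ≤ |z| := by
    intro z
    have h1 := le_abs_self (η * z)
    rwa [abs_mul, hηabs, one_mul] at h1
  -- if the spatial max were attained with value ≤ Q ts we get a contradiction
  have htsIoc : ts ∈ Set.Ioc (0:ℝ) t := ⟨hts0, hts.2⟩
  have htsIocT : ts ∈ Set.Ioc (0:ℝ) T := ⟨hts0, le_of_lt htsT⟩
  have hQcontra : ¬ (|u ts xbar| ≤ Q ts) := by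
    intro hle
    have h1 : Q ts * Real.exp (-ζ * (t - ts)) ≤ sSup S := hS_le ts htsIoc
    have h2 : |u ts xbar| * Real.exp (-ζ * (t - ts)) ≤ Q ts * Real.exp (-ζ * (t - ts)) :=
      mul_le_mul_of_nonneg_right hle (le_of_lt (Real.exp_pos _))
    have harg : -ζ * (t - ts) = ζ * (ts - t) := by ring
    have h3 : |u ts xbar| * Real.exp (-ζ * (t - ts)) = Wstar := by
      rw [harg, mul_comm]; exact hxbar_eq
    have h4 : R' < Mt := hcon
    linarith [hWstar_lb]
  -- the maximizer is interior
  have hxbarI : xbar ∈ Set.Ioo (0:ℝ) 1 := by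
    rcases lt_or_eq_of_le hxbar.1 with h0 | h0
    · rcases lt_or_eq_of_le hxbar.2 with h1 | h1
      · exact ⟨h0, h1⟩
      · exfalso
        apply hQcontra
        have hbx : |u ts xbar| = |u ts 1| := by rw [h1]
        have hmax1 : ∀ y ∈ Set.Icc (0:ℝ) 1, η * u ts y ≤ η * u ts 1 := by
          intro y hy
          calc η * u ts y ≤ |u ts y| := hηmul_abs _
            _ ≤ |u ts xbar| := hxbar_max y hy
            _ = η * u ts xbar := hηu.symm
            _ = η * u ts 1 := by rw [h1]
        have hd := ((hux_bd ts htsIocT).2).const_mul η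
        have hxd : 0 ≤ η * ux ts 1 := bd_deriv_right (by simpa using hd) hmax1
        have hu1 : η * u ts 1 = |u ts 1| := by rw [← h1, hηu, hbx]
        have hu1nn : 0 ≤ η * u ts 1 := by rw [hu1]; exact abs_nonneg _
        have hRob : |u ts 1| ≤ η * (g₁ ts * ux ts 1 + k₁ ts * u ts 1) := by
          have hg := hg₁ ts htsIocT
          have hk := hk₁ ts htsIocT
          have e1 : η * (g₁ ts * ux ts 1 + k₁ ts * u ts 1)
              = g₁ ts * (η * ux ts 1) + k₁ ts * (η * u ts 1) := by ring
          rw [e1, ← hu1]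
          have t1 : 0 ≤ g₁ ts * (η * ux ts 1) := mul_nonneg (le_of_lt hg) hxd
          have t2 : η * u ts 1 ≤ k₁ ts * (η * u ts 1) := le_mul_of_one_le_left hu1nn hk
          linarith
        have hRob' : |u ts 1| ≤ |g₁ ts * ux ts 1 + k₁ ts * u ts 1| :=
          le_trans hRob (hηmul_abs _)
        rw [hbx, hQ]
        refine le_trans (le_min le_rfl hRob') (le_trans ?_ (le_max_left _ _))
        exact le_max_right _ _
    · exfalso
      apply hQcontra
      have hbx : |u ts xbar| = |u ts 0| := by rw [← h0]
      have hmax0 : ∀ y ∈ Set.Icc (0:ℝ) 1, η * u ts y ≤ η * u ts 0 := by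
        intro y hy
        calc η * u ts y ≤ |u ts y| := hηmul_abs _
          _ ≤ |u ts xbar| := hxbar_max y hy
          _ = η * u ts xbar := hηu.symm
          _ = η * u ts 0 := by rw [← h0]
      have hd := ((hux_bd ts htsIocT).1).const_mul η
      have hxd : η * ux ts 0 ≤ 0 := bd_deriv_left (by simpa using hd) hmax0
      have hu0 : η * u ts 0 = |u ts 0| := by rw [← h0] at hηu; exact hηu
      have hu0nn : 0 ≤ η * u ts 0 := by rw [hu0]; exact abs_nonneg _
      have hRob : |u ts 0| ≤ η * -(g₀ ts * ux ts 0 - k₀ ts * u ts 0) := by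
        have hg := hg₀ ts htsIocT
        have hk := hk₀ ts htsIocT
        have e1 : η * -(g₀ ts * ux ts 0 - k₀ ts * u ts 0)
            = -(g₀ ts * (η * ux ts 0)) + k₀ ts * (η * u ts 0) := by ring
        rw [e1, ← hu0]
        have t1 : g₀ ts * (η * ux ts 0) ≤ 0 :=
          mul_nonpos_of_nonneg_of_nonpos (le_of_lt hg) hxd
        have t2 : η * u ts 0 ≤ k₀ ts * (η * u ts 0) := le_mul_of_one_le_left hu0nn hk
        linarith
      have hRob' : |u ts 0| ≤ |g₀ ts * ux ts 0 - k₀ ts * u ts 0| := by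
        refine le_trans hRob (le_trans (hηmul_abs _) ?_)
        rw [abs_neg]
      rw [hbx, hQ]
      refine le_trans (le_min le_rfl hRob') (le_trans ?_ (le_max_left _ _))
      exact le_max_left _ _
  -- eventual facts along the sequence
  have hev1 : ∀ᶠ n in atTop, X (φ n) ∈ Set.Ioo (0:ℝ) 1 :=
    hXφ.eventually (isOpen_Ioo.eventually_mem hxbarI)
  have hupos_lim : Tendsto (fun n => η * u (s (φ n)) (X (φ n))) atTop
      (𝓝 (η * u ts xbar)) := tendsto_const_nhds.mul hu_lim
  have hev2 : ∀ᶠ n in atTop, 0 < η * u (s (φ n)) (X (φ n)) :=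
    hupos_lim.eventually (eventually_gt_nhds (by rw [hηu]; exact habs_pos))
  -- the key differential inequality at good times
  have hineq : ∀ᶠ n in atTop, η * ut (s (φ n)) (X (φ n)) ≤
      -σ * (η * u (s (φ n)) (X (φ n))) + (σ - ζ) * R' * Real.exp (ζ * (t - s (φ n))) := by
    filter_upwards [hev1, hev2] with n hxI hpos
    obtain ⟨hd1, hd2, _, hpde⟩ := hsgood (φ n)
    have habs_eq : |u (s (φ n)) (X (φ n))| = η * u (s (φ n)) (X (φ n)) := by
      rw [← abs_of_pos hpos, abs_mul, hηabs, one_mul]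
    have hmaxn : ∀ y ∈ Set.Icc (0:ℝ) 1, η * u (s (φ n)) y ≤ η * u (s (φ n)) (X (φ n)) := by
      intro y hy
      calc η * u (s (φ n)) y ≤ |u (s (φ n)) y| := hηmul_abs _
        _ ≤ |u (s (φ n)) (X (φ n))| := hXmax (φ n) y hy
        _ = η * u (s (φ n)) (X (φ n)) := habs_eq
    have hd1' : ∀ x ∈ Set.Ioo (0:ℝ) 1,
        HasDerivAt (fun y => η * u (s (φ n)) y) (η * ux (s (φ n)) x) x :=
      fun x hx => (hd1 x hx).const_mul η
    have hd2' : HasDerivAt (fun y => η * ux (s (φ n)) y) (η * uxx (s (φ n)) (X (φ n)))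
        (X (φ n)) := (hd2 (X (φ n)) hxI).const_mul η
    obtain ⟨hux0, huxx0⟩ := second_deriv_nonpos hxI hd1' hd2' hmaxn
    have hux0' : ux (s (φ n)) (X (φ n)) = 0 := by
      rcases hη1 with h | h <;> rw [h] at hux0 <;> linarith
    have hpde' := hpde (X (φ n)) hxI
    have hην : η * ut (s (φ n)) (X (φ n)) =
        a (s (φ n)) (X (φ n)) * (η * uxx (s (φ n)) (X (φ n)))
        + c (s (φ n)) (X (φ n)) * (η * u (s (φ n)) (X (φ n)))
        + η * f (s (φ n)) (X (φ n)) := by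
      rw [hpde', hux0']; ring
    have t1 : a (s (φ n)) (X (φ n)) * (η * uxx (s (φ n)) (X (φ n))) ≤ 0 :=
      mul_nonpos_of_nonneg_of_nonpos (ha (s (φ n)) (hsIooT (φ n)) (X (φ n)) hxI) huxx0
    have t2 : c (s (φ n)) (X (φ n)) * (η * u (s (φ n)) (X (φ n))) ≤
        -σ * (η * u (s (φ n)) (X (φ n))) :=
      mul_le_mul_of_nonneg_right (hc (s (φ n)) (hsIooT (φ n)) (X (φ n)) hxI) (le_of_lt hpos)
    have t3 : η * f (s (φ n)) (X (φ n)) ≤ F (s (φ n)) :=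
      le_trans (hηmul_abs _) (hFub (s (φ n)) (hsIoc (φ n)) (X (φ n)) hxI)
    have t4 : F (s (φ n)) ≤ (σ - ζ) * (R' * Real.exp (ζ * (t - s (φ n)))) := by
      have q1 : F (s (φ n)) / (σ - ζ) ≤ Q (s (φ n)) := by rw [hQ]; exact le_max_right _ _
      have q2 : Q (s (φ n)) * Real.exp (-ζ * (t - s (φ n))) ≤ R' :=
        le_trans (hS_le (s (φ n)) (hsIoct (φ n))) hSR
      have q3 : Real.exp (-ζ * (t - s (φ n))) * Real.exp (ζ * (t - s (φ n))) = 1 := by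
        rw [← Real.exp_add]
        have : -ζ * (t - s (φ n)) + ζ * (t - s (φ n)) = 0 := by ring
        rw [this, Real.exp_zero]
      have q4 : Q (s (φ n)) ≤ R' * Real.exp (ζ * (t - s (φ n))) := by
        have q5 := mul_le_mul_of_nonneg_right q2 (le_of_lt (Real.exp_pos (ζ * (t - s (φ n)))))
        rw [mul_assoc, q3, mul_one] at q5
        exact q5
      have q6 : F (s (φ n)) ≤ (σ - ζ) * Q (s (φ n)) := by
        rw [div_le_iff₀ hσζ] at q1
        linarith [q1]
      calc F (s (φ n)) ≤ (σ - ζ) * Q (s (φ n)) := q6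
        _ ≤ (σ - ζ) * (R' * Real.exp (ζ * (t - s (φ n)))) :=
          mul_le_mul_of_nonneg_left q4 (le_of_lt hσζ)
    rw [hην]
    have := add_le_add (add_le_add t1 t2) t3
    calc a (s (φ n)) (X (φ n)) * (η * uxx (s (φ n)) (X (φ n)))
        + c (s (φ n)) (X (φ n)) * (η * u (s (φ n)) (X (φ n)))
        + η * f (s (φ n)) (X (φ n))
        ≤ 0 + -σ * (η * u (s (φ n)) (X (φ n))) + F (s (φ n)) := this
      _ ≤ -σ * (η * u (s (φ n)) (X (φ n))) + (σ - ζ) * R' * Real.exp (ζ * (t - s (φ n))) := by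
          have e1 : (σ - ζ) * R' * Real.exp (ζ * (t - s (φ n)))
              = (σ - ζ) * (R' * Real.exp (ζ * (t - s (φ n)))) := by ring
          rw [e1]
          linarith
  -- pass to the limit in the differential inequality
  have hut_lim : Tendsto (fun n => ut (s (φ n)) (X (φ n))) atTop (𝓝 (ut ts xbar)) := by
    have hpt : ((ts, xbar) : ℝ × ℝ) ∈ Set.Ioo (0:ℝ) T ×ˢ Set.Icc (0:ℝ) 1 :=
      ⟨⟨hts0, htsT⟩, hxbar⟩
    have hpair : Tendsto (fun n => ((s (φ n), X (φ n)) : ℝ × ℝ)) atTop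
        (𝓝[Set.Ioo (0:ℝ) T ×ˢ Set.Icc (0:ℝ) 1] (ts, xbar)) :=
      tendsto_nhdsWithin_of_tendsto_nhds_of_eventually_within _ (hsφ.prodMk_nhds hXφ)
        (Eventually.of_forall fun n => ⟨hsIooT (φ n), hXmem (φ n)⟩)
    exact ((hut_cont (ts, xbar) hpt).tendsto).comp hpair
  have hL : Tendsto (fun n => η * ut (s (φ n)) (X (φ n))) atTop (𝓝 (η * ut ts xbar)) :=
    tendsto_const_nhds.mul hut_lim
  have hexp_lim2 : Tendsto (fun n => Real.exp (ζ * (t - s (φ n)))) atTop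
      (𝓝 (Real.exp (ζ * (t - ts)))) := by
    have hcont : Continuous (fun r : ℝ => Real.exp (ζ * (t - r))) :=
      Real.continuous_exp.comp (continuous_const.mul (continuous_const.sub continuous_id))
    exact (hcont.tendsto ts).comp hsφ
  have hR : Tendsto (fun n => -σ * (η * u (s (φ n)) (X (φ n)))
      + (σ - ζ) * R' * Real.exp (ζ * (t - s (φ n)))) atTop
      (𝓝 (-σ * (η * u ts xbar) + (σ - ζ) * R' * Real.exp (ζ * (t - ts)))) :=
    (tendsto_const_nhds.mul (tendsto_const_nhds.mul hu_lim)).add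
      (tendsto_const_nhds.mul hexp_lim2)
  have hfinal_ub : η * ut ts xbar ≤
      -σ * (η * u ts xbar) + (σ - ζ) * R' * Real.exp (ζ * (t - ts)) :=
    le_of_tendsto_of_tendsto hL hR hineq
  -- lower bound on the time derivative at (ts, xbar)
  have hmono : ∀ r ∈ Set.Icc (0:ℝ) ts,
      η * u r xbar * Real.exp (ζ * (r - t)) + δ * r ≤
      η * u ts xbar * Real.exp (ζ * (ts - t)) + δ * ts := by
    intro r hr
    have h1 := hpmax' (r, xbar) ⟨⟨hr.1, le_trans hr.2 hts.2⟩, hxbar⟩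
    rw [hWstar_eq] at h1
    have h2 : Φ (r, xbar) = Real.exp (ζ * (r - t)) * |u r xbar| + δ * r := by rw [hΦ]
    rw [h2] at h1
    have h3 : η * u r xbar * Real.exp (ζ * (r - t)) ≤ Real.exp (ζ * (r - t)) * |u r xbar| := by
      rw [mul_comm]
      exact mul_le_mul_of_nonneg_left (hηmul_abs _) (le_of_lt (Real.exp_pos _))
    have h4 : η * u ts xbar * Real.exp (ζ * (ts - t)) = Wstar := by
      rw [hηu, mul_comm]; exact hxbar_eq
    linarith
  have hder : HasDerivAt (fun r => η * u r xbar * Real.exp (ζ * (r - t)) + δ * r)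
      (η * ut ts xbar * Real.exp (ζ * (ts - t))
        + η * u ts xbar * (Real.exp (ζ * (ts - t)) * ζ) + δ * 1) ts := by
    have h1 : HasDerivAt (fun r => u r xbar) (ut ts xbar) ts :=
      hut ts ⟨hts0, htsT⟩ xbar hxbar
    have h3 : HasDerivAt (fun r : ℝ => ζ * (r - t)) ζ ts := by
      simpa using ((hasDerivAt_id ts).sub_const t).const_mul ζ
    have h2 : HasDerivAt (fun r : ℝ => Real.exp (ζ * (r - t)))
        (Real.exp (ζ * (ts - t)) * ζ) ts := h3.exp
    exact ((h1.const_mul η).mul h2).add ((hasDerivAt_id ts).const_mul δ)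
  have hder_nonneg : 0 ≤ η * ut ts xbar * Real.exp (ζ * (ts - t))
      + η * u ts xbar * (Real.exp (ζ * (ts - t)) * ζ) + δ * 1 :=
    deriv_nonneg_of_max_left hder hts0 hmono
  -- derive the contradiction
  have hprod : Real.exp (ζ * (t - ts)) * Real.exp (ζ * (ts - t)) = 1 := by
    rw [← Real.exp_add]
    have : ζ * (t - ts) + ζ * (ts - t) = 0 := by ring
    rw [this, Real.exp_zero]
  have h4 : η * u ts xbar * Real.exp (ζ * (ts - t)) = Wstar := by
    rw [hηu, mul_comm]; exact hxbar_eq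
  have e1 : η * ut ts xbar * Real.exp (ζ * (ts - t)) ≤
      (-σ * (η * u ts xbar) + (σ - ζ) * R' * Real.exp (ζ * (t - ts)))
        * Real.exp (ζ * (ts - t)) :=
    mul_le_mul_of_nonneg_right hfinal_ub (le_of_lt hEts_pos)
  have e2 : (-σ * (η * u ts xbar) + (σ - ζ) * R' * Real.exp (ζ * (t - ts)))
        * Real.exp (ζ * (ts - t)) = -σ * Wstar + (σ - ζ) * R' := by
    have e3 : (-σ * (η * u ts xbar) + (σ - ζ) * R' * Real.exp (ζ * (t - ts)))
          * Real.exp (ζ * (ts - t))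
        = -σ * (η * u ts xbar * Real.exp (ζ * (ts - t)))
          + (σ - ζ) * R' * (Real.exp (ζ * (t - ts)) * Real.exp (ζ * (ts - t))) := by ring
    rw [e3, h4, hprod, mul_one]
  have e4 : η * u ts xbar * (Real.exp (ζ * (ts - t)) * ζ) = ζ * Wstar := by
    rw [← h4]; ring
  have e5 : 0 ≤ -σ * Wstar + (σ - ζ) * R' + ζ * Wstar + δ := by
    rw [e2] at e1
    rw [e4] at hder_nonneg
    linarith
  have e6 : (σ - ζ) * (Wstar - R') ≤ δ := by nlinarith [e5]
  have e7 : ε ≤ Wstar - R' := by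
    rw [hε]
    linarith [hWstar_lb]
  have e8 : (σ - ζ) * ε ≤ δ :=
    le_trans (mul_le_mul_of_nonneg_left e7 (le_of_lt hσζ)) e6
  rw [hδ] at e8
  nlinarith [mul_pos hσζ hε0]


set_option maxHeartbeats 1000000 in
theorem lem4_4
    (T : ℝ) (hT : 0 < T)
    (a b c f : ℝ → ℝ → ℝ)
    (hf_bdd : ∃ M : ℝ, ∀ t ∈ Set.Ioc (0:ℝ) T, ∀ x ∈ Set.Ioo (0:ℝ) 1, |f t x| ≤ M)
    (u ut ux uxx : ℝ → ℝ → ℝ)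
    (hu_cont : ContinuousOn (fun p : ℝ × ℝ => u p.1 p.2) (Set.Icc 0 T ×ˢ Set.Icc 0 1))
    (hut : ∀ t ∈ Set.Ioo (0:ℝ) T, ∀ x ∈ Set.Icc (0:ℝ) 1,
      HasDerivAt (fun τ => u τ x) (ut t x) t)
    (hut_cont : ContinuousOn (fun p : ℝ × ℝ => ut p.1 p.2) (Set.Ioo 0 T ×ˢ Set.Icc 0 1))
    (hux_bd : ∀ t ∈ Set.Ioc (0:ℝ) T,
      HasDerivWithinAt (u t) (ux t 0) (Set.Icc 0 1) 0 ∧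
      HasDerivWithinAt (u t) (ux t 1) (Set.Icc 0 1) 1)
    (hC2_pde : ∀ᵐ t ∂(volume.restrict (Set.Ioo 0 T)),
      (∀ x ∈ Set.Ioo (0:ℝ) 1, HasDerivAt (u t) (ux t x) x) ∧
      (∀ x ∈ Set.Ioo (0:ℝ) 1, HasDerivAt (ux t) (uxx t x) x) ∧
      ContinuousOn (uxx t) (Set.Ioo 0 1) ∧
      (∀ x ∈ Set.Ioo (0:ℝ) 1,
        ut t x = a t x * uxx t x + b t x * ux t x + c t x * u t x + f t x))
    (ha : ∀ t ∈ Set.Ioo (0:ℝ) T, ∀ x ∈ Set.Ioo (0:ℝ) 1, 0 ≤ a t x)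
    (σ : ℝ)
    (hσ_def : σ = - sSup ((fun p : ℝ × ℝ => c p.1 p.2) '' (Set.Ioo 0 T ×ˢ Set.Ioo 0 1)))
    (hσ : 0 < σ) :
    ∀ ζ ∈ Set.Ico (0:ℝ) σ, ∀ g₀ g₁ k₀ k₁ : ℝ → ℝ,
      (∀ s ∈ Set.Ioc (0:ℝ) T, 0 < g₀ s) → (∀ s ∈ Set.Ioc (0:ℝ) T, 0 < g₁ s) →
      (∀ s ∈ Set.Ioc (0:ℝ) T, 1 ≤ k₀ s) → (∀ s ∈ Set.Ioc (0:ℝ) T, 1 ≤ k₁ s) →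
      ∀ t ∈ Set.Ioc (0:ℝ) T,
      sSup ((fun x => |u t x|) '' Set.Icc 0 1) ≤
        max (Real.exp (-ζ * t) * sSup ((fun x => |u 0 x|) '' Set.Icc 0 1))
          (sSup ((fun s =>
              max (max
                  (min (|u s 0|) (|g₀ s * ux s 0 - k₀ s * u s 0|))
                  (min (|u s 1|) (|g₁ s * ux s 1 + k₁ s * u s 1|)))
                (sSup ((fun x => |f s x|) '' Set.Ioo 0 1) / (σ - ζ)) *
              Real.exp (-ζ * (t - s))) '' Set.Ioc 0 t)) := by
  intro ζ hζ g₀ g₁ k₀ k₁ hg₀ hg₁ hk₀ hk₁ t ht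
  obtain ⟨ht0, htT⟩ := ht
  rcases lt_or_eq_of_le htT with hlt | heq
  · exact key T hT a b c f hf_bdd u ut ux uxx hu_cont hut hut_cont hux_bd hC2_pde ha
      σ hσ_def hσ ζ hζ.1 hζ.2 g₀ g₁ k₀ k₁ hg₀ hg₁ hk₀ hk₁ t ht0 hlt
  · subst heq
    obtain ⟨hζ0, hζσ⟩ := hζ
    have hσζ : 0 < σ - ζ := sub_pos.mpr hζσ
    obtain ⟨Mf, hMf⟩ := hf_bdd
    have hMf0 : 0 ≤ Mf :=
      le_trans (abs_nonneg _) (hMf t ⟨ht0, le_refl t⟩ (1/2) (by norm_num))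
    obtain ⟨Cu, hCu⟩ : ∃ C : ℝ, ∀ p ∈ (Set.Icc (0:ℝ) t ×ˢ Set.Icc (0:ℝ) 1), |u p.1 p.2| ≤ C := by
      obtain ⟨C, hC⟩ := (isCompact_Icc.prod isCompact_Icc).exists_bound_of_continuousOn hu_cont
      exact ⟨C, fun p hp => by simpa using hC p hp⟩
    have huc : ∀ s ∈ Set.Icc (0:ℝ) t, ContinuousOn (fun x => |u s x|) (Set.Icc 0 1) := by
      intro s hs
      have h1 : ContinuousOn (fun x : ℝ => u s x) (Set.Icc 0 1) := by
        have := hu_cont.comp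
          ((continuous_const.prodMk continuous_id).continuousOn :
            ContinuousOn (fun x : ℝ => ((s, x) : ℝ × ℝ)) (Set.Icc 0 1))
          (fun x hx => ⟨hs, hx⟩)
        exact this
      exact h1.abs
    set F : ℝ → ℝ := fun s => sSup ((fun x => |f s x|) '' Set.Ioo 0 1) with hF
    set Q : ℝ → ℝ := fun s =>
        max (max (min (|u s 0|) (|g₀ s * ux s 0 - k₀ s * u s 0|))
            (min (|u s 1|) (|g₁ s * ux s 1 + k₁ s * u s 1|))) (F s / (σ - ζ)) with hQ
    have hQ0 : ∀ s, 0 ≤ Q s := by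
      intro s
      exact le_trans (le_min (abs_nonneg _) (abs_nonneg _))
        (le_trans (le_max_left _ _) (le_max_left _ _))
    have hQub : ∀ s ∈ Set.Ioc (0:ℝ) t, Q s ≤ max Cu (Mf / (σ - ζ)) := by
      intro s hs
      have hs' : s ∈ Set.Icc (0:ℝ) t := ⟨le_of_lt hs.1, hs.2⟩
      have h0 : |u s 0| ≤ Cu := hCu (s, 0) ⟨hs', by norm_num⟩
      have h1 : |u s 1| ≤ Cu := hCu (s, 1) ⟨hs', by norm_num⟩
      have hFs : F s ≤ Mf := Real.sSup_le (by rintro y ⟨x, hx, rfl⟩; exact hMf s hs x hx) hMf0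
      refine max_le (max_le ?_ ?_) ?_
      · exact le_trans (min_le_left _ _) (le_trans h0 (le_max_left _ _))
      · exact le_trans (min_le_left _ _) (le_trans h1 (le_max_left _ _))
      · refine le_trans ?_ (le_max_right _ _)
        exact div_le_div_of_nonneg_right hFs (le_of_lt hσζ) |>.trans le_rfl
    set S : Set ℝ := (fun s => Q s * Real.exp (-ζ * (t - s))) '' Set.Ioc 0 t with hS
    have hSbdd : BddAbove S := by
      refine ⟨max Cu (Mf / (σ - ζ)), ?_⟩
      rintro y ⟨s, hs, rfl⟩
      have he1 : Real.exp (-ζ * (t - s)) ≤ 1 := by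
        rw [Real.exp_le_one_iff]
        have : 0 ≤ t - s := sub_nonneg.mpr hs.2
        nlinarith
      calc Q s * Real.exp (-ζ * (t - s)) ≤ Q s * 1 :=
            mul_le_mul_of_nonneg_left he1 (hQ0 s)
        _ = Q s := mul_one _
        _ ≤ max Cu (Mf / (σ - ζ)) := hQub s hs
    have hS_le : ∀ s ∈ Set.Ioc (0:ℝ) t, Q s * Real.exp (-ζ * (t - s)) ≤ sSup S := by
      intro s hs
      exact le_csSup hSbdd ⟨s, hs, rfl⟩
    set M0 : ℝ := sSup ((fun x => |u 0 x|) '' Set.Icc 0 1) with hM0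
    have hM0nn : 0 ≤ M0 := Real.sSup_nonneg (by rintro y ⟨x, hx, rfl⟩; exact abs_nonneg _)
    set R' : ℝ := max (Real.exp (-ζ * t) * M0) (sSup S) with hR'
    have hR'0 : 0 ≤ R' := le_trans (by positivity) (le_max_left _ _)
    have hSR : sSup S ≤ R' := by rw [hR']; exact le_max_right _ _
    show sSup ((fun x => |u t x|) '' Set.Icc 0 1) ≤ R'
    obtain ⟨xh, hxh, hxhmax, hxhsup⟩ := max_on_Icc (huc t ⟨le_of_lt ht0, le_refl t⟩)
    rw [hxhsup]
    -- the estimate at interior times, pushed to the boundary time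
    have hstep : ∀ t' ∈ Set.Ioo (0:ℝ) t, |u t' xh| ≤ Real.exp (ζ * (t - t')) * R' := by
      intro t' ht'
      have hk := key t ht0 a b c f ⟨Mf, hMf⟩ u ut ux uxx hu_cont hut hut_cont hux_bd hC2_pde ha
        σ hσ_def hσ ζ hζ0 hζσ g₀ g₁ k₀ k₁ hg₀ hg₁ hk₀ hk₁ t' ht'.1 ht'.2
      have h1 : |u t' xh| ≤ sSup ((fun x => |u t' x|) '' Set.Icc 0 1) := by
        obtain ⟨x', hx', hmax', hsup'⟩ := max_on_Icc (huc t' ⟨le_of_lt ht'.1, le_of_lt ht'.2⟩)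
        rw [hsup']
        exact hmax' xh hxh
      refine le_trans (le_trans h1 hk) (max_le ?_ ?_)
      · have q : Real.exp (-ζ * t') = Real.exp (ζ * (t - t')) * Real.exp (-ζ * t) := by
          rw [← Real.exp_add]; congr 1; ring
        rw [q, mul_assoc]
        refine mul_le_mul_of_nonneg_left ?_ (le_of_lt (Real.exp_pos _))
        rw [hR']
        exact le_max_left _ _
      · apply Real.sSup_le
        · rintro y ⟨s, hs, rfl⟩
          have hsT : s ∈ Set.Ioc (0:ℝ) t := ⟨hs.1, le_trans hs.2 (le_of_lt ht'.2)⟩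
          have q1 : Q s * Real.exp (-ζ * (t - s)) ≤ sSup S := hS_le s hsT
          have q2 : Real.exp (-ζ * (t' - s)) =
              Real.exp (ζ * (t - t')) * Real.exp (-ζ * (t - s)) := by
            rw [← Real.exp_add]; congr 1; ring
          calc Q s * Real.exp (-ζ * (t' - s))
              = Real.exp (ζ * (t - t')) * (Q s * Real.exp (-ζ * (t - s))) := by rw [q2]; ring
            _ ≤ Real.exp (ζ * (t - t')) * R' :=
              mul_le_mul_of_nonneg_left (le_trans q1 hSR) (le_of_lt (Real.exp_pos _))
        · positivity
    -- pass to the limit t' → t⁻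
    have hpt : ((t, xh) : ℝ × ℝ) ∈ Set.Icc (0:ℝ) t ×ˢ Set.Icc (0:ℝ) 1 :=
      ⟨⟨le_of_lt ht0, le_refl t⟩, hxh⟩
    have hpair : Tendsto (fun t' => ((t', xh) : ℝ × ℝ)) (𝓝[<] t)
        (𝓝[Set.Icc (0:ℝ) t ×ˢ Set.Icc (0:ℝ) 1] (t, xh)) := by
      refine tendsto_nhdsWithin_of_tendsto_nhds_of_eventually_within _
        (((continuous_id.prodMk continuous_const).tendsto t).mono_left nhdsWithin_le_nhds) ?_
      filter_upwards [Ioo_mem_nhdsLT_of_mem (⟨ht0, le_refl t⟩ : t ∈ Set.Ioc 0 t)] with t' ht'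
      exact ⟨⟨le_of_lt ht'.1, le_of_lt ht'.2⟩, hxh⟩
    have hxT : Tendsto (fun t' => |u t' xh|) (𝓝[<] t) (𝓝 (|u t xh|)) :=
      (((hu_cont (t, xh) hpt).tendsto).comp hpair).abs
    have hrhs : Tendsto (fun t' => Real.exp (ζ * (t - t')) * R') (𝓝[<] t) (𝓝 R') := by
      have hc1 : Continuous (fun t' : ℝ => Real.exp (ζ * (t - t')) * R') :=
        (Real.continuous_exp.comp
          (continuous_const.mul (continuous_const.sub continuous_id))).mul continuous_const
      have h2 := (hc1.tendsto t).mono_left (nhdsWithin_le_nhds (s := Set.Iio t))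
      simpa using h2
    refine le_of_tendsto_of_tendsto hxT hrhs ?_
    filter_upwards [Ioo_mem_nhdsLT_of_mem (⟨ht0, le_refl t⟩ : t ∈ Set.Ioc 0 t)] with t' ht'
    exact hstep t' ht'
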